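/- Let (Ω, F, μ) be a probability space, let Z_0, Z_1, …, Z_n be random variables with values in measurable spaces E_0, …, E_n, let F_k = σ(Z_0, …, Z_k), let h be a bounded nonnegative measurable function of the trajectory (Z_0, …, Z_n) with p := E[h] and with μ[(μ[h | F_k])² | F_{k-1}] > 0 almost surely for each 1 ≤ k ≤ n. For each 0 ≤ k ≤ n−1 let G_k be a strictly positive bounded measurable function of (Z_0, …, Z_k) such that ∏_{s=0}^{k-1} G_s(Z_0,…,Z_s) and (μ[h|F_k])² ∏_{s=0}^{k-1} G_s(Z_0,…,Z_s)^{-1} are integrable for every k. Then Σ_{k=0}^{n} { E[ ∏_{s=0}^{k-1} G_s(Z_0,…,Z_s) ] · E[ (μ[h | F_k])² ∏_{s=0}^{k-1} G_s(Z_0,…,Z_s)^{-1} ] − p² } ≥ ( E[(μ[h | F_0])²] − p² ) + Σ_{k=1}^{n} { ( E[ √( μ[ (μ[h | F_k])² | F_{k-1} ] ) ] )² − p² }, with the convention that the empty product ∏_{s=0}^{-1} equals 1. -/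

import Mathlib

open MeasureTheory

/-- The σ-algebra `σ(Z_0, …, Z_k)` generated by the first `k+1` coordinates of a
process `Z` with values in the measurable spaces `E i`. -/
def trajFiltration {Ω : Type*} {E : ℕ → Type*} [∀ i, MeasurableSpace (E i)]
    (Z : ∀ i, Ω → E i) (k : ℕ) : MeasurableSpace Ω :=
  ⨆ i ∈ Finset.range (k + 1), MeasurableSpace.comap (Z i) inferInstance

/-- Cauchy–Schwarz for integrals in the form needed here. -/
lemma sq_integral_sqrt_le_integral_mul {α : Type*} [MeasurableSpace α]
    (μ : Measure α) (A M : α → ℝ)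
    (hApos : ∀ ω, 0 < A ω) (hMnn : 0 ≤ᵐ[μ] M)
    (hAint : Integrable A μ) (hBint : Integrable (fun ω => M ω * (A ω)⁻¹) μ)
    (hSint : Integrable (fun ω => Real.sqrt (M ω)) μ) :
    (∫ ω, Real.sqrt (M ω) ∂μ) ^ 2 ≤
      (∫ ω, A ω ∂μ) * ∫ ω, M ω * (A ω)⁻¹ ∂μ := by
  set B : α → ℝ := fun ω => M ω * (A ω)⁻¹ with hB
  have hBnn : 0 ≤ᵐ[μ] B := by
    filter_upwards [hMnn] with ω hM
    exact mul_nonneg hM (inv_nonneg.mpr (hApos ω).le)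
  have hAnn : 0 ≤ᵐ[μ] A := Filter.Eventually.of_forall fun ω => (hApos ω).le
  have hSnn : 0 ≤ᵐ[μ] fun ω => Real.sqrt (M ω) :=
    Filter.Eventually.of_forall fun ω => Real.sqrt_nonneg _
  set f : α → ENNReal := fun ω => ENNReal.ofReal (Real.sqrt (A ω)) with hf
  set g : α → ENNReal := fun ω => ENNReal.ofReal (Real.sqrt (B ω)) with hg
  have hfm : AEMeasurable f μ := (Real.continuous_sqrt.measurable.comp_aemeasurable hAint.aemeasurable).ennreal_ofReal
  have hgm : AEMeasurable g μ := (Real.continuous_sqrt.measurable.comp_aemeasurable hBint.aemeasurable).ennreal_ofReal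
  have hkey : (fun ω => ENNReal.ofReal (Real.sqrt (M ω))) =ᵐ[μ] f * g := by
    filter_upwards [hMnn] with ω hM
    have hA := (hApos ω).le
    have hprod : Real.sqrt (A ω) * Real.sqrt (B ω) = Real.sqrt (M ω) := by
      rw [← Real.sqrt_mul hA]
      congr 1
      show A ω * (M ω * (A ω)⁻¹) = M ω
      rw [mul_comm, mul_assoc, inv_mul_cancel₀ (hApos ω).ne', mul_one]
    simp only [Pi.mul_apply, hf, hg,
      ← ENNReal.ofReal_mul (Real.sqrt_nonneg (A ω)), hprod]
  have hpq : Real.HolderConjugate 2 2 := Real.HolderConjugate.two_two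
  have holder := ENNReal.lintegral_mul_le_Lp_mul_Lq μ hpq hfm hgm
  have hfA : ∫⁻ ω, f ω ^ (2:ℝ) ∂μ = ENNReal.ofReal (∫ ω, A ω ∂μ) := by
    rw [ofReal_integral_eq_lintegral_ofReal hAint hAnn]
    refine lintegral_congr fun ω => ?_
    simp only [hf]
    rw [ENNReal.ofReal_rpow_of_nonneg (Real.sqrt_nonneg _) (by norm_num : (0:ℝ) ≤ 2),
      Real.rpow_two, Real.sq_sqrt (hApos ω).le]
  have hgB : ∫⁻ ω, g ω ^ (2:ℝ) ∂μ = ENNReal.ofReal (∫ ω, B ω ∂μ) := by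
    rw [ofReal_integral_eq_lintegral_ofReal hBint hBnn]
    refine lintegral_congr_ae ?_
    filter_upwards [hBnn] with ω hBω
    simp only [hg]
    rw [ENNReal.ofReal_rpow_of_nonneg (Real.sqrt_nonneg _) (by norm_num : (0:ℝ) ≤ 2),
      Real.rpow_two, Real.sq_sqrt hBω]
  have hS : ∫⁻ ω, (f * g) ω ∂μ = ENNReal.ofReal (∫ ω, Real.sqrt (M ω) ∂μ) := by
    rw [ofReal_integral_eq_lintegral_ofReal hSint hSnn]
    exact (lintegral_congr_ae hkey).symm
  rw [hfA, hgB, hS] at holder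
  have hIA : 0 ≤ ∫ ω, A ω ∂μ := integral_nonneg_of_ae hAnn
  have hIB : 0 ≤ ∫ ω, B ω ∂μ := integral_nonneg_of_ae hBnn
  have holder' : ENNReal.ofReal (∫ ω, Real.sqrt (M ω) ∂μ) ≤
      ENNReal.ofReal (Real.sqrt (∫ ω, A ω ∂μ) * Real.sqrt (∫ ω, B ω ∂μ)) := by
    refine holder.trans_eq ?_
    rw [ENNReal.ofReal_rpow_of_nonneg hIA (by norm_num : (0:ℝ) ≤ 1/2),
      ENNReal.ofReal_rpow_of_nonneg hIB (by norm_num : (0:ℝ) ≤ 1/2),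
      ← ENNReal.ofReal_mul (Real.rpow_nonneg hIA _),
      Real.sqrt_eq_rpow, Real.sqrt_eq_rpow]
  have hle : (∫ ω, Real.sqrt (M ω) ∂μ) ≤
      Real.sqrt (∫ ω, A ω ∂μ) * Real.sqrt (∫ ω, B ω ∂μ) :=
    (ENNReal.ofReal_le_ofReal_iff
      (mul_nonneg (Real.sqrt_nonneg _) (Real.sqrt_nonneg _))).mp holder'
  calc (∫ ω, Real.sqrt (M ω) ∂μ) ^ 2
      ≤ (Real.sqrt (∫ ω, A ω ∂μ) * Real.sqrt (∫ ω, B ω ∂μ)) ^ 2 :=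
        pow_le_pow_left₀ (integral_nonneg fun ω => Real.sqrt_nonneg _) hle 2
    _ = (∫ ω, A ω ∂μ) * ∫ ω, B ω ∂μ := by
        rw [mul_pow, Real.sq_sqrt hIA, Real.sq_sqrt hIB]


/-- **The potentials `G*_k` minimize the IPS asymptotic variance.**
For any strictly positive bounded adapted potentials `(G_k)_{k<n}` (with the stated
integrability), the IPS asymptotic variance
`Σ_{k=0}^{n} { E[∏_{s<k} G_s] · E[(μ[h|F_k])² ∏_{s<k} G_s⁻¹] − p² }` is bounded below
by the optimal variance
`(E[(μ[h|F_0])²] − p²) + Σ_{k=1}^{n} { (E[√(μ[(μ[h|F_k])²|F_{k-1}])])² − p² }`. -/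
theorem ips_variance_lower_bound {Ω : Type*} [MeasurableSpace Ω]
    (μ : Measure Ω) [IsProbabilityMeasure μ]
    {E : ℕ → Type*} [∀ i, MeasurableSpace (E i)]
    (Z : ∀ i, Ω → E i) (hZ : ∀ i, Measurable (Z i))
    (n : ℕ) (h : Ω → ℝ)
    (hmeas : Measurable[trajFiltration Z n] h) (hnonneg : ∀ ω, 0 ≤ h ω)
    (C : ℝ) (hbdd : ∀ ω, h ω ≤ C)
    (p : ℝ) (hp : p = ∫ ω, h ω ∂μ)
    (hDpos : ∀ k, 1 ≤ k → k ≤ n → ∀ᵐ ω ∂μ,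
      0 < (μ[fun ω' => ((μ[h | trajFiltration Z k]) ω') ^ 2 |
              trajFiltration Z (k - 1)]) ω)
    (G : ℕ → Ω → ℝ)
    (hGmeas : ∀ k, k ≤ n - 1 → Measurable[trajFiltration Z k] (G k))
    (hGpos : ∀ k, k ≤ n - 1 → ∀ ω, 0 < G k ω)
    (hGbdd : ∀ k, k ≤ n - 1 → ∃ D, ∀ ω, G k ω ≤ D)
    (hint1 : ∀ k, k ≤ n → Integrable (fun ω => ∏ s ∈ Finset.range k, G s ω) μ)
    (hint2 : ∀ k, k ≤ n → Integrable
      (fun ω => ((μ[h | trajFiltration Z k]) ω) ^ 2 *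
        ∏ s ∈ Finset.range k, (G s ω)⁻¹) μ) :
    ((∫ ω, ((μ[h | trajFiltration Z 0]) ω) ^ 2 ∂μ) - p ^ 2) +
      ∑ k ∈ Finset.Icc 1 n,
        ((∫ ω, Real.sqrt
            ((μ[fun ω' => ((μ[h | trajFiltration Z k]) ω') ^ 2 |
                trajFiltration Z (k - 1)]) ω) ∂μ) ^ 2 - p ^ 2) ≤
    ∑ k ∈ Finset.range (n + 1),
      ((∫ ω, ∏ s ∈ Finset.range k, G s ω ∂μ) *
        (∫ ω, ((μ[h | trajFiltration Z k]) ω) ^ 2 *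
          ∏ s ∈ Finset.range k, (G s ω)⁻¹ ∂μ) - p ^ 2) := by
  classical
  have hle : ∀ k, trajFiltration Z k ≤ ‹MeasurableSpace Ω› := fun k =>
    iSup₂_le fun i _ => measurable_iff_comap_le.mp (hZ i)
  have hmono : ∀ {j k : ℕ}, j ≤ k → trajFiltration Z j ≤ trajFiltration Z k := by
    intro j k hjk
    refine iSup₂_le fun i hi => ?_
    exact le_iSup₂_of_le i
      (Finset.mem_range.mpr (lt_of_lt_of_le (Finset.mem_range.mp hi) (by omega))) le_rfl
  have hhmeas : Measurable h := hmeas.mono (hle n) le_rfl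
  have hInth : Integrable h μ := by
    refine (integrable_const C).mono' hhmeas.aestronglyMeasurable ?_
    exact Filter.Eventually.of_forall fun ω => by
      rw [Real.norm_eq_abs, abs_of_nonneg (hnonneg ω)]; exact hbdd ω
  have hC : 0 ≤ C := by
    obtain ⟨ω, -⟩ := nonempty_of_measure_ne_zero
      (μ := μ) (s := Set.univ) (by simp)
    exact (hnonneg ω).trans (hbdd ω)
  -- conditional expectations H k = μ[h | F_k]
  have hHnn : ∀ k : ℕ, 0 ≤ᵐ[μ] μ[h | trajFiltration Z k] := fun k =>
    condExp_nonneg (Filter.Eventually.of_forall hnonneg)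
  have hHle : ∀ k : ℕ, μ[h | trajFiltration Z k] ≤ᵐ[μ] fun _ => C := by
    intro k
    have h1 := condExp_mono (m := trajFiltration Z k) (μ := μ) hInth
      (integrable_const C) (Filter.Eventually.of_forall hbdd)
    rwa [condExp_const (hle k) C] at h1
  have hHmeas : ∀ k : ℕ, Measurable (μ[h | trajFiltration Z k]) := fun k =>
    (stronglyMeasurable_condExp.mono (hle k)).measurable
  have hHsq_int : ∀ k : ℕ, Integrable (fun ω => ((μ[h | trajFiltration Z k]) ω) ^ 2) μ := by
    intro k
    refine (integrable_const (C ^ 2)).mono'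
      (((hHmeas k).pow_const 2).aestronglyMeasurable) ?_
    filter_upwards [hHnn k, hHle k] with ω h0 h1
    rw [Real.norm_eq_abs, abs_of_nonneg (sq_nonneg _)]
    exact pow_le_pow_left₀ h0 h1 2
  -- the M k = μ[H_k² | F_{k-1}]
  set M : ℕ → Ω → ℝ := fun k =>
    μ[fun ω' => ((μ[h | trajFiltration Z k]) ω') ^ 2 | trajFiltration Z (k - 1)] with hM_def
  have hMnn : ∀ k, 0 ≤ᵐ[μ] M k := fun k =>
    condExp_nonneg (Filter.Eventually.of_forall fun ω => sq_nonneg _)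
  have hMle : ∀ k, M k ≤ᵐ[μ] fun _ => C ^ 2 := by
    intro k
    have h1 := condExp_mono (m := trajFiltration Z (k - 1)) (μ := μ) (hHsq_int k)
      (integrable_const (C ^ 2)) ?_
    · rwa [condExp_const (hle (k - 1)) (C ^ 2)] at h1
    · filter_upwards [hHnn k, hHle k] with ω h0 h1
      exact pow_le_pow_left₀ h0 h1 2
  have hMmeas : ∀ k, Measurable (M k) := fun k =>
    (stronglyMeasurable_condExp.mono (hle (k - 1))).measurable
  have hSint : ∀ k, Integrable (fun ω => Real.sqrt (M k ω)) μ := by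
    intro k
    refine (integrable_const C).mono'
      ((hMmeas k).sqrt.aestronglyMeasurable) ?_
    filter_upwards [hMnn k, hMle k] with ω h0 h1
    rw [Real.norm_eq_abs, abs_of_nonneg (Real.sqrt_nonneg _)]
    calc Real.sqrt (M k ω) ≤ Real.sqrt (C ^ 2) := Real.sqrt_le_sqrt h1
      _ = C := Real.sqrt_sq hC
  -- split the sum
  have hsplit : Finset.range (n + 1) = insert 0 (Finset.Icc 1 n) := by
    ext x
    simp only [Finset.mem_range, Finset.mem_insert, Finset.mem_Icc]
    omega
  rw [hsplit, Finset.sum_insert (by simp)]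
  have h0eq : (∫ ω, ∏ s ∈ Finset.range 0, G s ω ∂μ) *
      (∫ ω, ((μ[h | trajFiltration Z 0]) ω) ^ 2 *
        ∏ s ∈ Finset.range 0, (G s ω)⁻¹ ∂μ) - p ^ 2 =
      (∫ ω, ((μ[h | trajFiltration Z 0]) ω) ^ 2 ∂μ) - p ^ 2 := by
    simp [integral_const, measure_univ]
  rw [h0eq]
  refine add_le_add le_rfl (Finset.sum_le_sum fun k hk => ?_)
  rw [Finset.mem_Icc] at hk
  obtain ⟨hk1, hkn⟩ := hk
  -- notation
  set A : Ω → ℝ := fun ω => ∏ s ∈ Finset.range k, G s ω with hA_def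
  have hGs : ∀ s, s < k → s ≤ n - 1 := fun s hs => by omega
  have hApos : ∀ ω, 0 < A ω := fun ω =>
    Finset.prod_pos fun s hs => hGpos s (hGs s (Finset.mem_range.mp hs)) ω
  -- the inverse-product function, F_{k-1}-measurable
  set f : Ω → ℝ := fun ω => ∏ s ∈ Finset.range k, (G s ω)⁻¹ with hf_def
  have hfSM : StronglyMeasurable[trajFiltration Z (k - 1)] f := by
    refine Measurable.stronglyMeasurable ?_
    refine Finset.measurable_prod _ fun s hs => ?_
    have hs' := Finset.mem_range.mp hs
    exact (((hGmeas s (hGs s hs')).mono (hmono (by omega : s ≤ k - 1)) le_rfl)).inv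
  have hfA : ∀ ω, f ω = (A ω)⁻¹ := fun ω => by
    simp only [hf_def, hA_def, Finset.prod_inv_distrib]
  -- tower property
  haveI : SigmaFinite (μ.trim (hle (k - 1))) := by infer_instance
  have hfH_int : Integrable (f * fun ω => ((μ[h | trajFiltration Z k]) ω) ^ 2) μ := by
    refine (hint2 k hkn).congr (Filter.Eventually.of_forall fun ω => ?_)
    simp only [Pi.mul_apply, hf_def]
    ring
  have hpull := condExp_mul_of_stronglyMeasurable_left hfSM hfH_int (hHsq_int k)
  have hint_fM : Integrable (f * M k) μ := integrable_condExp.congr hpull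
  have htower : ∫ ω, ((μ[h | trajFiltration Z k]) ω) ^ 2 *
      ∏ s ∈ Finset.range k, (G s ω)⁻¹ ∂μ = ∫ ω, M k ω * (A ω)⁻¹ ∂μ := by
    have e1 : ∫ ω, ((μ[h | trajFiltration Z k]) ω) ^ 2 *
        ∏ s ∈ Finset.range k, (G s ω)⁻¹ ∂μ =
        ∫ ω, (f * fun ω' => ((μ[h | trajFiltration Z k]) ω') ^ 2) ω ∂μ := by
      refine integral_congr_ae (Filter.Eventually.of_forall fun ω => ?_)
      simp only [Pi.mul_apply, hf_def]; ring
    rw [e1, ← integral_condExp (hle (k - 1))]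
    refine integral_congr_ae (hpull.trans ?_)
    refine Filter.Eventually.of_forall fun ω => ?_
    simp only [Pi.mul_apply, hfA ω, hM_def]
    ring
  rw [htower]
  have hBint : Integrable (fun ω => M k ω * (A ω)⁻¹) μ := by
    refine hint_fM.congr (Filter.Eventually.of_forall fun ω => ?_)
    simp only [Pi.mul_apply, hfA ω]; ring
  have hCS := sq_integral_sqrt_le_integral_mul μ A (M k) hApos (hMnn k)
    (hint1 k hkn) hBint (hSint k)
  have : (∫ ω, Real.sqrt (M k ω) ∂μ) ^ 2 - p ^ 2 ≤
      (∫ ω, A ω ∂μ) * (∫ ω, M k ω * (A ω)⁻¹ ∂μ) - p ^ 2 := by linarith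
  exact this
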